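/- The kinetic weight ζ is invariant along characteristics: if s ↦ (η(s), a(s), b(s)) is a characteristic curve on an interval I with η(s) ≥ 0 for all s ∈ I, then the function s ↦ ζ(η(s), a(s), b(s)) is constant on I. -/

import Mathlib

/-- The kinetic weight `ζ(η, a, b) = √((a² + b²) − ((R_κ − εη)/R_κ)² b²)`. -/
noncomputable def kineticWeight (Rκ ε η a b : ℝ) : ℝ :=
  Real.sqrt ((a ^ 2 + b ^ 2) - ((Rκ - ε * η) / Rκ) ^ 2 * b ^ 2)

/-- The kinetic weight `ζ` is invariant along the characteristic
curves of the ε-Milne problem with geometric correction. -/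
theorem kineticWeight_conserved_along_characteristics
    (Rκ ε : ℝ) (hR : 0 < Rκ) (hε : 0 < ε)
    (I : Set ℝ) (hI : Convex ℝ I)
    (η a b : ℝ → ℝ)
    (hdom : ∀ s ∈ I, ε * η s < Rκ)
    (hpos : ∀ s ∈ I, 0 ≤ η s)
    (hη : ∀ s ∈ I, HasDerivAt η (a s) s)
    (ha : ∀ s ∈ I, HasDerivAt a ((-ε / (Rκ - ε * η s)) * (b s) ^ 2) s)
    (hb : ∀ s ∈ I, HasDerivAt b (-((-ε / (Rκ - ε * η s)) * a s * b s)) s) :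
    ∀ s ∈ I, ∀ t ∈ I,
      kineticWeight Rκ ε (η s) (a s) (b s) = kineticWeight Rκ ε (η t) (a t) (b t) := by
  set f : ℝ → ℝ := fun s => (a s ^ 2 + b s ^ 2) - ((Rκ - ε * η s) / Rκ) ^ 2 * b s ^ 2
    with hf
  have key : ∀ x ∈ I, HasDerivWithinAt f 0 I x := by
    intro x hx
    have hden : Rκ - ε * η x ≠ 0 := sub_ne_zero.mpr (hdom x hx).ne'
    have hRne : Rκ ≠ 0 := ne_of_gt hR
    have h1 := ((ha x hx).pow 2).add ((hb x hx).pow 2)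
    have h2 := ((((hη x hx).const_mul ε).const_sub Rκ).div_const Rκ).pow 2
    have h := (h1.sub (h2.mul ((hb x hx).pow 2)))
    have h0 : HasDerivAt f 0 x := by
      refine HasDerivAt.congr_deriv h ?_
      push_cast [Pi.pow_apply]
      field_simp
      ring
    exact h0.hasDerivWithinAt
  have hconst : ∀ s ∈ I, ∀ t ∈ I, f s = f t := by
    intro s hs t ht
    have := hI.norm_image_sub_le_of_norm_hasDerivWithin_le (C := 0) key
      (fun x _ => by simp) ht hs
    have h0 : ‖f s - f t‖ ≤ 0 := by simpa using this
    have := norm_nonneg (f s - f t)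
    have : f s - f t = 0 := by
      have := le_antisymm h0 (norm_nonneg _)
      exact norm_eq_zero.mp this
    linarith
  intro s hs t ht
  unfold kineticWeight
  exact congrArg Real.sqrt (hconst s hs t ht)
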